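/- Let γ be a positive trace-class operator on a Hilbert space H with trace 1, and let p = |φ⟩⟨φ| be a rank-one orthogonal projection. If γ converges to p weakly (i.e., ⟨ψ, γψ'⟩ → ⟨ψ, pψ'⟩ for all ψ, ψ', or equivalently in expectation against compact operators), then γ converges to p in trace norm. -/

import Mathlib

open scoped ComplexOrder ENNReal NNReal
set_option maxHeartbeats 4000000
set_option synthInstance.maxHeartbeats 1000000

local notation "⟪" x ", " y "⟫" => (inner ℂ x y : ℂ)

namespace TraceAux

variable {H : Type*} [NormedAddCommGroup H] [InnerProductSpace ℂ H] [CompleteSpace H]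
variable {ι : Type*}

lemma parseval_real (e : HilbertBasis ι ℂ H) (x : H) :
    HasSum (fun j : ι => ‖(inner ℂ (e j) x : ℂ)‖ ^ 2) (‖x‖ ^ 2) := by
  have h := (Complex.reCLM : ℂ →L[ℝ] ℝ).hasSum (e.hasSum_inner_mul_inner x x)
  have hx : (inner ℂ x x : ℂ).re = ‖x‖ ^ 2 := by
    rw [← inner_self_eq_norm_sq (𝕜 := ℂ)]; rfl
  have ht : ∀ j : ι, ((inner ℂ x (e j) : ℂ) * (inner ℂ (e j) x : ℂ)).re
      = ‖(inner ℂ (e j) x : ℂ)‖ ^ 2 := by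
    intro j
    have hz : (inner ℂ x (e j) : ℂ) = (starRingEnd ℂ) (inner ℂ (e j) x : ℂ) := by
      rw [inner_conj_symm]
    rw [hz, mul_comm, Complex.mul_conj, Complex.ofReal_re, Complex.normSq_eq_norm_sq]
  simpa only [Complex.reCLM_apply, ht, hx] using h

lemma parseval_ennreal (e : HilbertBasis ι ℂ H) (x : H) :
    ∑' j : ι, (‖(inner ℂ (e j) x : ℂ)‖₊ ^ 2 : ℝ≥0∞) = (‖x‖₊ ^ 2 : ℝ≥0∞) := by
  have h : HasSum (fun j : ι => (‖(inner ℂ (e j) x : ℂ)‖₊ ^ 2 : ℝ≥0)) (‖x‖₊ ^ 2) := by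
    rw [← NNReal.hasSum_coe]
    push_cast
    exact parseval_real e x
  exact_mod_cast ENNReal.tsum_coe_eq h

lemma hs_flip (e : HilbertBasis ι ℂ H) (C : H →L[ℂ] H) :
    ∑' i : ι, (‖(ContinuousLinearMap.adjoint C) (e i)‖₊ ^ 2 : ℝ≥0∞)
      = ∑' j : ι, (‖C (e j)‖₊ ^ 2 : ℝ≥0∞) := by
  calc ∑' i : ι, (‖(ContinuousLinearMap.adjoint C) (e i)‖₊ ^ 2 : ℝ≥0∞)
      = ∑' i : ι, ∑' j : ι, (‖(inner ℂ (e j) ((ContinuousLinearMap.adjoint C) (e i)) : ℂ)‖₊ ^ 2 : ℝ≥0∞) := by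
        simp_rw [parseval_ennreal]
    _ = ∑' j : ι, ∑' i : ι, (‖(inner ℂ (e i) (C (e j)) : ℂ)‖₊ ^ 2 : ℝ≥0∞) := by
        rw [ENNReal.tsum_comm]
        congr 1; ext j; congr 1; ext i
        rw [ContinuousLinearMap.adjoint_inner_right]
        congr 2
        exact NNReal.coe_injective (by simpa using norm_inner_symm (𝕜 := ℂ) (C (e j)) (e i))
    _ = ∑' j : ι, (‖C (e j)‖₊ ^ 2 : ℝ≥0∞) := by simp_rw [parseval_ennreal]

lemma opnorm_sq_le (e : HilbertBasis ι ℂ H) (R : H →L[ℂ] H) (hR : IsSelfAdjoint R) {t : ℝ}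
    (ht : HasSum (fun i : ι => ‖R (e i)‖ ^ 2) t) (x : H) : ‖R x‖ ^ 2 ≤ t * ‖x‖ ^ 2 := by
  refine hasSum_le (g := fun j : ι => ‖R (e j)‖ ^ 2 * ‖x‖ ^ 2) (fun j => ?_)
    (parseval_real e (R x)) (ht.mul_right (‖x‖ ^ 2))
  have h1 : (inner ℂ (e j) (R x) : ℂ) = inner ℂ (R (e j)) x := by
    rw [← ContinuousLinearMap.adjoint_inner_left, hR.adjoint_eq]
  rw [h1]
  calc ‖(inner ℂ (R (e j)) x : ℂ)‖ ^ 2 ≤ (‖R (e j)‖ * ‖x‖) ^ 2 := by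
        apply pow_le_pow_left₀ (norm_nonneg _) (norm_inner_le_norm _ _)
    _ = ‖R (e j)‖ ^ 2 * ‖x‖ ^ 2 := by ring

lemma trace_pos_bound (e : HilbertBasis ι ℂ H) (C B : H →L[ℂ] H) {t : ℝ}
    (ht : HasSum (fun i : ι => ‖C (e i)‖ ^ 2) t) (hB : ‖B‖ ≤ 1) :
    ∃ z : ℂ, HasSum
      (fun i : ι => (inner ℂ (C ((ContinuousLinearMap.adjoint B) (e i))) (C (e i)) : ℂ)) z
      ∧ ‖z‖ ≤ t := by
  set B' := ContinuousLinearMap.adjoint B with hB'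
  have ht0 : 0 ≤ t := ht.nonneg (fun i => sq_nonneg _)
  have htE : ∑' i : ι, (‖C (e i)‖₊ ^ 2 : ℝ≥0∞) = ENNReal.ofReal t := by
    have h : HasSum (fun i : ι => (‖C (e i)‖₊ ^ 2 : ℝ≥0)) t.toNNReal := by
      rw [← NNReal.hasSum_coe]
      push_cast [Real.coe_toNNReal t ht0]
      exact ht
    have h2 := ENNReal.tsum_coe_eq h
    simp only [ENNReal.coe_pow] at h2
    rw [h2]
    rfl
  have hCB : ContinuousLinearMap.adjoint (B * ContinuousLinearMap.adjoint C) = C * B' := by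
    rw [ContinuousLinearMap.mul_def, ContinuousLinearMap.mul_def,
      ContinuousLinearMap.adjoint_comp, ContinuousLinearMap.adjoint_adjoint, hB']
  have hAE : ∑' i : ι, (‖C (B' (e i))‖₊ ^ 2 : ℝ≥0∞) ≤ ENNReal.ofReal t := by
    have h1 : ∀ i : ι, C (B' (e i)) = (C * B') (e i) := fun _ => rfl
    calc ∑' i : ι, (‖C (B' (e i))‖₊ ^ 2 : ℝ≥0∞)
        = ∑' j : ι, (‖(B * ContinuousLinearMap.adjoint C) (e j)‖₊ ^ 2 : ℝ≥0∞) := by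
          simp_rw [h1, ← hCB]; exact hs_flip e _
      _ ≤ ∑' j : ι, (‖(ContinuousLinearMap.adjoint C) (e j)‖₊ ^ 2 : ℝ≥0∞) := by
          refine ENNReal.tsum_le_tsum fun j => ?_
          have h2 : ‖(B * ContinuousLinearMap.adjoint C) (e j)‖₊
              ≤ ‖(ContinuousLinearMap.adjoint C) (e j)‖₊ := by
            calc ‖B ((ContinuousLinearMap.adjoint C) (e j))‖₊
                ≤ ‖B‖₊ * ‖(ContinuousLinearMap.adjoint C) (e j)‖₊ :=
                  ContinuousLinearMap.le_opNNNorm B _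
              _ ≤ 1 * ‖(ContinuousLinearMap.adjoint C) (e j)‖₊ := by
                  gcongr
                  exact_mod_cast hB
              _ = _ := one_mul _
          gcongr
      _ = ∑' j : ι, (‖C (e j)‖₊ ^ 2 : ℝ≥0∞) := hs_flip e C
      _ = ENNReal.ofReal t := htE
  have hAsummNN : Summable (fun i : ι => (‖C (B' (e i))‖₊ ^ 2 : ℝ≥0)) := by
    rw [← ENNReal.tsum_coe_ne_top_iff_summable]
    have : ∑' i : ι, ((‖C (B' (e i))‖₊ ^ 2 : ℝ≥0) : ℝ≥0∞) ≤ ENNReal.ofReal t := by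
      simpa [ENNReal.coe_pow] using hAE
    exact ne_top_of_le_ne_top ENNReal.ofReal_ne_top this
  have hAsumm : Summable (fun i : ι => ‖C (B' (e i))‖ ^ 2) := by
    have := NNReal.summable_coe.mpr hAsummNN
    push_cast at this
    exact this
  have hAle : ∑' i : ι, ‖C (B' (e i))‖ ^ 2 ≤ t := by
    have h1 : (↑(∑' i : ι, (‖C (B' (e i))‖₊ ^ 2 : ℝ≥0)) : ℝ≥0∞) ≤ ENNReal.ofReal t := by
      rw [← ENNReal.tsum_coe_eq hAsummNN.hasSum]
      simpa [ENNReal.coe_pow] using hAE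
    have h2 : (∑' i : ι, (‖C (B' (e i))‖₊ ^ 2 : ℝ≥0)) ≤ t.toNNReal := by
      rw [ENNReal.ofReal] at h1
      exact_mod_cast h1
    calc ∑' i : ι, ‖C (B' (e i))‖ ^ 2
        = ((∑' i : ι, (‖C (B' (e i))‖₊ ^ 2 : ℝ≥0) : ℝ≥0) : ℝ) := by
          rw [NNReal.coe_tsum]; simp
      _ ≤ (t.toNNReal : ℝ) := by exact_mod_cast h2
      _ = t := Real.coe_toNNReal t ht0
  set g : ι → ℝ := fun i => (‖C (B' (e i))‖ ^ 2 + ‖C (e i)‖ ^ 2) / 2 with hg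
  have hgsumm : Summable g := (hAsumm.add ht.summable).div_const 2
  have hgsum : ∑' i, g i ≤ t := by
    rw [hg, tsum_div_const, Summable.tsum_add hAsumm ht.summable]
    linarith [hAle, ht.tsum_eq.le]
  have hpt : ∀ i : ι, ‖(inner ℂ (C (B' (e i))) (C (e i)) : ℂ)‖ ≤ g i := by
    intro i
    calc ‖(inner ℂ (C (B' (e i))) (C (e i)) : ℂ)‖ ≤ ‖C (B' (e i))‖ * ‖C (e i)‖ :=
          norm_inner_le_norm _ _
      _ ≤ (‖C (B' (e i))‖ ^ 2 + ‖C (e i)‖ ^ 2) / 2 := by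
          nlinarith [sq_nonneg (‖C (B' (e i))‖ - ‖C (e i)‖)]
  have hsumm : Summable (fun i : ι => (inner ℂ (C (B' (e i))) (C (e i)) : ℂ)) :=
    Summable.of_norm_bounded hgsumm hpt
  refine ⟨∑' i, (inner ℂ (C (B' (e i))) (C (e i)) : ℂ), hsumm.hasSum, ?_⟩
  calc ‖∑' i, (inner ℂ (C (B' (e i))) (C (e i)) : ℂ)‖
      ≤ ∑' i, ‖(inner ℂ (C (B' (e i))) (C (e i)) : ℂ)‖ :=
        norm_tsum_le_tsum_norm (hgsumm.of_nonneg_of_le (fun _ => norm_nonneg _) hpt)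
    _ ≤ ∑' i, g i := Summable.tsum_le_tsum hpt (hgsumm.of_nonneg_of_le (fun _ => norm_nonneg _) hpt) hgsumm
    _ ≤ t := hgsum

end TraceAux

/-- **Weak convergence to a rank-one projection upgrades to trace-norm
convergence**: if `γ n` are positive trace-class operators of trace one on a
Hilbert space `H` (trace computed in a Hilbert basis `e`), `p = |φ⟩⟨φ|` is a
rank-one orthogonal projection, and `⟨ψ, γ n ψ'⟩ → ⟨ψ, p ψ'⟩` for all
`ψ, ψ'`, then `γ n → p` in trace norm, where the trace norm of a trace-class
operator `A` is `sup_{‖B‖ ≤ 1} |Tr (B A)|`. -/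
theorem traceNorm_convergence_of_weak
    {H : Type*} [NormedAddCommGroup H] [InnerProductSpace ℂ H] [CompleteSpace H]
    {ι : Type*} (e : HilbertBasis ι ℂ H)
    (γ : ℕ → H →L[ℂ] H) (φ : H) (hφ : ‖φ‖ = 1)
    (p : H →L[ℂ] H) (hp : ∀ ψ : H, p ψ = (inner ℂ φ ψ : ℂ) • φ)
    (hpos : ∀ (n : ℕ) (ψ : H), 0 ≤ (inner ℂ ψ (γ n ψ) : ℂ))
    (htrace : ∀ n : ℕ, HasSum (fun i : ι => (inner ℂ (e i) (γ n (e i)) : ℂ)) 1)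
    (hweak : ∀ ψ ψ' : H,
      Filter.Tendsto (fun n : ℕ => (inner ℂ ψ (γ n ψ') : ℂ)) Filter.atTop
        (nhds (inner ℂ ψ (p ψ')))) :
    Filter.Tendsto
      (fun n : ℕ => ⨆ B : {B : H →L[ℂ] H // ‖B‖ ≤ 1},
        ‖∑' i : ι, (inner ℂ (e i) (B.1 ((γ n - p) (e i))) : ℂ)‖)
      Filter.atTop (nhds 0) := by
  classical
  have hp_adj : ContinuousLinearMap.adjoint p = p := by
    symm
    rw [ContinuousLinearMap.eq_adjoint_iff]
    intro x y
    simp only [hp, inner_smul_left, inner_smul_right]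
    rw [← inner_conj_symm x φ]
    ring
  have hTpos : ∀ n, (0 : H →L[ℂ] H) ≤ γ n := by
    intro n
    rw [ContinuousLinearMap.nonneg_iff_isPositive, ContinuousLinearMap.isPositive_iff_complex]
    intro x
    have h := hpos n x
    rw [Complex.le_def] at h
    have h2 : ⟪(γ n) x, x⟫ = (starRingEnd ℂ) ⟪x, (γ n) x⟫ := (inner_conj_symm _ _).symm
    rw [h2]
    simp only [Complex.conj_re, Complex.conj_im, Complex.ext_iff, Complex.ofReal_re,
      Complex.ofReal_im, Complex.zero_re, Complex.zero_im] at *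
    exact ⟨⟨rfl, by rw [← h.2]; simp⟩, h.1⟩
  have hT_adj : ∀ n, ContinuousLinearMap.adjoint (γ n) = γ n := fun n =>
    ((ContinuousLinearMap.nonneg_iff_isPositive (γ n)).mp (hTpos n)).isSelfAdjoint.adjoint_eq
  set l : ℕ → ℝ := fun n => (⟪φ, (γ n) φ⟫).re with hl
  have hl0 : ∀ n, 0 ≤ l n := by
    intro n
    have h := hpos n φ
    rw [Complex.le_def] at h
    simpa using h.1
  -- the key per-n bound
  have key : ∀ n (B : {B : H →L[ℂ] H // ‖B‖ ≤ 1}),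
      ‖∑' i : ι, ⟪e i, B.1 ((γ n - p) (e i))⟫‖
        ≤ 2 * (1 - l n) + 2 * Real.sqrt (1 - l n) := by
    intro n B
    set T := γ n with hTdef
    have hT0 : (0 : H →L[ℂ] H) ≤ T := hTpos n
    have hTadj : ContinuousLinearMap.adjoint T = T := hT_adj n
    have hTmove : ∀ a b : H, ⟪T a, b⟫ = ⟪a, T b⟫ := by
      intro a b
      calc ⟪T a, b⟫ = ⟪ContinuousLinearMap.adjoint T a, b⟫ := by rw [hTadj]
        _ = ⟪a, T b⟫ := by rw [ContinuousLinearMap.adjoint_inner_left]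
    set R := CFC.sqrt T with hRdef
    have hR0 : (0 : H →L[ℂ] H) ≤ R := CFC.sqrt_nonneg T
    have hRmul : R * R = T := CFC.sqrt_mul_sqrt_self T hT0
    have hRsa : IsSelfAdjoint R := IsSelfAdjoint.of_nonneg hR0
    have hRadj : ContinuousLinearMap.adjoint R = R := hRsa.adjoint_eq
    have hRR : ∀ x y : H, ⟪R x, R y⟫ = ⟪x, T y⟫ := by
      intro x y
      calc ⟪R x, R y⟫ = ⟪ContinuousLinearMap.adjoint R x, R y⟫ := by rw [hRadj]
        _ = ⟪x, R (R y)⟫ := by rw [ContinuousLinearMap.adjoint_inner_left]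
        _ = ⟪x, T y⟫ := by rw [← ContinuousLinearMap.mul_apply, hRmul]
    have hre_i : ∀ x : H, (⟪x, T x⟫).re = ‖R x‖ ^ 2 := by
      intro x
      rw [← hRR x x, ← inner_self_eq_norm_sq (𝕜 := ℂ)]
      rfl
    have htrR : HasSum (fun i : ι => ‖R (e i)‖ ^ 2) 1 := by
      have h := (Complex.reCLM : ℂ →L[ℝ] ℝ).hasSum (htrace n)
      simp only [Complex.reCLM_apply, Complex.one_re] at h
      refine HasSum.congr_fun h ?_
      intro i
      exact (hre_i (e i)).symm
    have hRnorm : ∀ x : H, ‖R x‖ ^ 2 ≤ ‖x‖ ^ 2 := fun x => by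
      simpa using TraceAux.opnorm_sq_le e R hRsa htrR x
    have hRphi : ‖R φ‖ ^ 2 = l n := (hre_i φ).symm
    have hl1 : l n ≤ 1 := by
      have h := hRnorm φ
      rw [hRphi, hφ] at h
      simpa using h
    have hlc : ⟪φ, T φ⟫ = ((l n : ℝ) : ℂ) := by
      have h := hpos n φ
      rw [Complex.le_def] at h
      refine Complex.ext rfl ?_
      simpa using h.2.symm
    have hlc' : ⟪T φ, φ⟫ = ((l n : ℝ) : ℂ) := by
      rw [← inner_conj_symm, hlc, Complex.conj_ofReal]
    set ε := 1 - l n with hε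
    have hε0 : 0 ≤ ε := by rw [hε]; linarith
    have hTφ : ‖T φ‖ ^ 2 ≤ l n := by
      have h1 : T φ = R (R φ) := by
        rw [← ContinuousLinearMap.mul_apply, hRmul]
      have h2 := TraceAux.opnorm_sq_le e R hRsa htrR (R φ)
      rw [← h1, one_mul, hRphi] at h2
      exact h2
    set v := T φ - ((l n : ℝ) : ℂ) • φ with hv
    have hvsq : ‖v‖ ^ 2 ≤ ε := by
      have h1 : ‖v‖ ^ 2 = ‖T φ‖ ^ 2 - 2 * (l n * l n) + l n ^ 2 := by
        rw [hv, @norm_sub_sq ℂ]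
        have h2 : (RCLike.re ⟪T φ, ((l n : ℝ) : ℂ) • φ⟫ : ℝ) = l n * l n := by
          rw [inner_smul_right, hlc']
          simp [← Complex.ofReal_mul]
        have h4 : ‖((l n : ℝ) : ℂ) • φ‖ ^ 2 = l n ^ 2 := by
          rw [norm_smul, hφ, mul_one, Complex.norm_real, Real.norm_eq_abs, sq_abs]
        rw [h2, h4]
      nlinarith [hTφ]
    have hvle : ‖v‖ ≤ Real.sqrt ε := by
      have h1 : ‖v‖ = Real.sqrt (‖v‖ ^ 2) := (Real.sqrt_sq (norm_nonneg v)).symm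
      rw [h1]
      exact Real.sqrt_le_sqrt hvsq
    -- operator C = R * (1 - p)
    set q : H →L[ℂ] H := 1 - p with hq
    have hp_sa : IsSelfAdjoint p := by
      show star p = p
      rw [ContinuousLinearMap.star_eq_adjoint]
      exact hp_adj
    have hq_sa : IsSelfAdjoint q := by
      rw [hq]
      exact (IsSelfAdjoint.one (R := H →L[ℂ] H)).sub hp_sa
    have hq_adj : ContinuousLinearMap.adjoint q = q := hq_sa.adjoint_eq
    have hq1 : ∀ x : H, q x = x - p x := by
      intro x; rw [hq]; simp
    have hqmove : ∀ a b : H, ⟪q a, b⟫ = ⟪a, q b⟫ := by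
      intro a b
      calc ⟪q a, b⟫ = ⟪ContinuousLinearMap.adjoint q a, b⟫ := by rw [hq_adj]
        _ = ⟪a, q b⟫ := by rw [ContinuousLinearMap.adjoint_inner_left]
    set C := R * q with hC
    have hCsum : HasSum (fun i : ι => ‖C (e i)‖ ^ 2) ε := by
      have hF : HasSum (fun i : ι => ⟪q (e i), T (q (e i))⟫) (1 - ((l n : ℝ) : ℂ)) := by
        have h1 := htrace n
        have h2 := e.hasSum_inner_mul_inner φ (T φ)
        have h3 := e.hasSum_inner_mul_inner (T φ) φ
        have h4 := (e.hasSum_inner_mul_inner φ φ).mul_left ((l n : ℝ) : ℂ)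
        have h5 := ((h1.sub h2).sub h3).add h4
        have hφφ : ⟪φ, φ⟫ = (1 : ℂ) := by
          rw [inner_self_eq_norm_sq_to_K, hφ]; norm_num
        have hval : (1 : ℂ) - ⟪φ, T φ⟫ - ⟪T φ, φ⟫ + ((l n : ℝ) : ℂ) * ⟪φ, φ⟫
            = 1 - ((l n : ℝ) : ℂ) := by rw [hlc, hlc', hφφ]; ring
        rw [hval] at h5
        refine HasSum.congr_fun h5 ?_
        intro i
        rw [hq1 (e i)]
        rw [map_sub, hp (e i)]
        have hTsm : T (⟪φ, e i⟫ • φ) = ⟪φ, e i⟫ • T φ := map_smul T _ _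
        rw [hTsm]
        have hTsym : ⟪φ, T (e i)⟫ = ⟪T φ, e i⟫ := (hTmove φ (e i)).symm
        simp only [inner_sub_left, inner_sub_right, inner_smul_left, inner_smul_right, hTsym,
          hlc]
        rw [← inner_conj_symm (e i) φ]
        ring
      have h := (Complex.reCLM : ℂ →L[ℝ] ℝ).hasSum hF
      simp only [Complex.reCLM_apply] at h
      have hre : ((1 : ℂ) - ((l n : ℝ) : ℂ)).re = ε := by
        rw [hε]; simp
      rw [hre] at h
      refine HasSum.congr_fun h ?_
      intro i
      have : C (e i) = R (q (e i)) := rfl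
      rw [this]
      exact (hre_i (q (e i))).symm
    obtain ⟨z0, hz0sum, hz0le⟩ := TraceAux.trace_pos_bound e C B.1 hCsum B.2
    set B' := ContinuousLinearMap.adjoint B.1 with hB'
    have hBmove : ∀ a b : H, ⟪B' a, b⟫ = ⟪a, B.1 b⟫ := by
      intro a b
      rw [hB', ContinuousLinearMap.adjoint_inner_left]
    have hterm0 : ∀ i : ι, ⟪C (B' (e i)), C (e i)⟫ = ⟪e i, B.1 (q (T (q (e i))))⟫ := by
      intro i
      have h1 : C (B' (e i)) = R (q (B' (e i))) := rfl
      have h2 : C (e i) = R (q (e i)) := rfl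
      rw [h1, h2, hRR, hqmove, hBmove]
    have ht1 := e.hasSum_inner_mul_inner (T φ) (B.1 φ)
    have ht2 := e.hasSum_inner_mul_inner φ (B.1 (T φ))
    have ht3 := (e.hasSum_inner_mul_inner φ (B.1 φ)).mul_left ((l n : ℝ) : ℂ)
    have ht4 := e.hasSum_inner_mul_inner φ (B.1 φ)
    set z : ℂ := z0 + ⟪T φ, B.1 φ⟫ + ⟪φ, B.1 (T φ)⟫
      - ((l n : ℝ) : ℂ) * ⟪φ, B.1 φ⟫ - ⟪φ, B.1 φ⟫ with hz
    have hGsum : HasSum (fun i : ι => ⟪e i, B.1 ((T - p) (e i))⟫) z := by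
      have h5 := (((hz0sum.add ht1).add ht2).sub ht3).sub ht4
      refine HasSum.congr_fun h5 ?_
      intro i
      have hdecomp : (T - p) (e i)
          = q (T (q (e i))) + (p (T (e i)) + T (p (e i)) - p (T (p (e i))) - p (e i)) := by
        simp only [ContinuousLinearMap.sub_apply, hq1, map_sub]
        abel
      rw [hdecomp]
      simp only [map_add, map_sub, inner_add_right, inner_sub_right]
      rw [hterm0 i]
      have e1 : ⟪e i, B.1 (p (T (e i)))⟫ = ⟪T φ, e i⟫ * ⟪e i, B.1 φ⟫ := by
        simp only [hp, map_smul, inner_smul_right]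
        rw [← hTmove φ (e i)]
      have e2 : ⟪e i, B.1 (T (p (e i)))⟫ = ⟪φ, e i⟫ * ⟪e i, B.1 (T φ)⟫ := by
        simp only [hp, map_smul, inner_smul_right]
      have e3 : ⟪e i, B.1 (p (T (p (e i))))⟫
          = ((l n : ℝ) : ℂ) * (⟪φ, e i⟫ * ⟪e i, B.1 φ⟫) := by
        simp only [hp, map_smul, inner_smul_right, hlc]
        ring
      have e4 : ⟪e i, B.1 (p (e i))⟫ = ⟪φ, e i⟫ * ⟪e i, B.1 φ⟫ := by
        simp only [hp, map_smul, inner_smul_right]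
      rw [e1, e2, e3, e4]
      ring
    have hzv : z = z0 + ⟪v, B.1 φ⟫ + ⟪φ, B.1 v⟫ + (((l n : ℝ) : ℂ) - 1) * ⟪φ, B.1 φ⟫ := by
      rw [hz, hv]
      simp only [inner_sub_left, inner_smul_left, map_sub, map_smul,
        inner_sub_right, inner_smul_right, Complex.conj_ofReal]
      ring
    have hBφ : ‖B.1 φ‖ ≤ 1 := by
      calc ‖B.1 φ‖ ≤ ‖B.1‖ * ‖φ‖ := B.1.le_opNorm φ
        _ ≤ 1 := by rw [hφ, mul_one]; exact B.2
    have hBv : ‖B.1 v‖ ≤ Real.sqrt ε := by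
      calc ‖B.1 v‖ ≤ ‖B.1‖ * ‖v‖ := B.1.le_opNorm v
        _ ≤ 1 * Real.sqrt ε := mul_le_mul B.2 hvle (norm_nonneg _) zero_le_one
        _ = Real.sqrt ε := one_mul _
    have b1 : ‖⟪v, B.1 φ⟫‖ ≤ Real.sqrt ε := by
      calc ‖⟪v, B.1 φ⟫‖ ≤ ‖v‖ * ‖B.1 φ‖ := norm_inner_le_norm _ _
        _ ≤ Real.sqrt ε * 1 := mul_le_mul hvle hBφ (norm_nonneg _) (Real.sqrt_nonneg _)
        _ = Real.sqrt ε := mul_one _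
    have b2 : ‖⟪φ, B.1 v⟫‖ ≤ Real.sqrt ε := by
      calc ‖⟪φ, B.1 v⟫‖ ≤ ‖φ‖ * ‖B.1 v‖ := norm_inner_le_norm _ _
        _ ≤ 1 * Real.sqrt ε := by rw [hφ]; simpa using hBv
        _ = Real.sqrt ε := one_mul _
    have b3 : ‖(((l n : ℝ) : ℂ) - 1) * ⟪φ, B.1 φ⟫‖ ≤ ε := by
      rw [norm_mul]
      have h1 : ‖(((l n : ℝ) : ℂ) - 1)‖ = ε := by
        rw [show (((l n : ℝ) : ℂ) - 1) = (((l n - 1 : ℝ)) : ℂ) by push_cast; ring,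
          Complex.norm_real, Real.norm_eq_abs, abs_of_nonpos (by linarith), hε]
        ring
      have h2 : ‖⟪φ, B.1 φ⟫‖ ≤ 1 := by
        calc ‖⟪φ, B.1 φ⟫‖ ≤ ‖φ‖ * ‖B.1 φ‖ := norm_inner_le_norm _ _
          _ ≤ 1 := by rw [hφ, one_mul]; exact hBφ
      calc ‖(((l n : ℝ) : ℂ) - 1)‖ * ‖⟪φ, B.1 φ⟫‖ ≤ ε * 1 :=
            mul_le_mul h1.le h2 (norm_nonneg _) hε0
        _ = ε := mul_one _
    have hzbound : ‖z‖ ≤ 2 * ε + 2 * Real.sqrt ε := by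
      rw [hzv]
      calc ‖z0 + ⟪v, B.1 φ⟫ + ⟪φ, B.1 v⟫ + (((l n : ℝ) : ℂ) - 1) * ⟪φ, B.1 φ⟫‖
          ≤ ‖z0 + ⟪v, B.1 φ⟫ + ⟪φ, B.1 v⟫‖ + ‖(((l n : ℝ) : ℂ) - 1) * ⟪φ, B.1 φ⟫‖ :=
            norm_add_le _ _
        _ ≤ (‖z0 + ⟪v, B.1 φ⟫‖ + ‖⟪φ, B.1 v⟫‖) + ‖(((l n : ℝ) : ℂ) - 1) * ⟪φ, B.1 φ⟫‖ := by
            gcongr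
            exact norm_add_le _ _
        _ ≤ ((‖z0‖ + ‖⟪v, B.1 φ⟫‖) + ‖⟪φ, B.1 v⟫‖)
              + ‖(((l n : ℝ) : ℂ) - 1) * ⟪φ, B.1 φ⟫‖ := by
            gcongr
            exact norm_add_le _ _
        _ ≤ ((ε + Real.sqrt ε) + Real.sqrt ε) + ε := by gcongr
        _ = 2 * ε + 2 * Real.sqrt ε := by ring
    rw [hGsum.tsum_eq]
    exact hzbound
  -- squeeze
  have hεto : Filter.Tendsto (fun n => 1 - l n) Filter.atTop (nhds 0) := by
    have h1 := hweak φ φ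
    have h2 : ⟪φ, p φ⟫ = (1 : ℂ) := by
      rw [hp φ, inner_smul_right, inner_self_eq_norm_sq_to_K, hφ]
      norm_num
    rw [h2] at h1
    have h3 := (Complex.reCLM : ℂ →L[ℝ] ℝ).continuous.continuousAt.tendsto.comp h1
    simp only [Function.comp_def, Complex.reCLM_apply, Complex.one_re] at h3
    have h4 : Filter.Tendsto l Filter.atTop (nhds 1) := h3
    have h5 := h4.const_sub 1
    simpa using h5
  have hgto : Filter.Tendsto (fun n => 2 * (1 - l n) + 2 * Real.sqrt (1 - l n))
      Filter.atTop (nhds 0) := by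
    have h1 := hεto.const_mul 2
    have h2 := (Real.continuous_sqrt.continuousAt.tendsto.comp hεto).const_mul 2
    simp only [Function.comp_def, Real.sqrt_zero, mul_zero] at h1 h2
    simpa using h1.add h2
  refine squeeze_zero (fun n => ?_) (fun n => ?_) hgto
  · exact Real.iSup_nonneg fun B => norm_nonneg _
  · have hnonneg : 0 ≤ 2 * (1 - l n) + 2 * Real.sqrt (1 - l n) :=
      le_trans (norm_nonneg _) (key n ⟨0, by simp⟩)
    exact Real.iSup_le (fun B => key n B) hnonneg
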